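/- Let X be a nonempty set, 𝓛 a space of abstract linear functions on X equipped with a topology, and f₁, …, f_m : X → ℝ ∪ {+∞} (m ≥ 2). Suppose the sum rule holds: for all x ∈ X and ε ≥ 0, ∂_ε(Σ_{i=1}^m f_i)(x) = ⋂_{η>0} cl( ⋃ { Σ_{i=1}^m ∂_{ε_i} f_i(x) : ε_i ≥ 0, Σ ε_i = ε + η } ), where cl denotes closure in 𝓛. Then the following two conditions are equivalent: (A) there exists K > 0 such that for all x ∈ X and ε > 0, ∂_ε(Σ_{i=1}^m f_i)(x) ⊆ Σ_{i=1}^m ∂_{Kε} f_i(x); (B) there exists K > 0 such that for all x ∈ X and ε > 0, cl( Σ_{i=1}^m ∂_ε f_i(x) ) ⊆ Σ_{i=1}^m ∂_{Kε} f_i(x). Moreover, if (B) holds with constant K then (A) holds with any constant K' > K, and if (A) holds with constant K then (B) holds with constant mK. -/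

import Mathlib

open Set
open scoped Pointwise

variable {X : Type*}

/-- A space of abstract linear functions on `X`: a nonempty family of real-valued
functions closed under addition, each of whose members admits additive decompositions
of every length `m ≥ 1` inside the family. -/
def IsLinSpace (L : Set (X → ℝ)) : Prop :=
  L.Nonempty ∧
    (∀ l₁ ∈ L, ∀ l₂ ∈ L, l₁ + l₂ ∈ L) ∧
    (∀ l ∈ L, ∀ m : ℕ, 1 ≤ m →
      ∃ g : Fin m → (X → ℝ), (∀ i, g i ∈ L) ∧ l = ∑ i, g i)

/-- Fenchel conjugate of `f : X → ℝ ∪ {+∞}`: `f*(l) = sup_x (l x - f x)`. -/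
noncomputable def fconj (f : X → EReal) (l : X → ℝ) : EReal :=
  ⨆ x : X, ((l x : EReal) - f x)

/-- Abstract biconjugate `f**(x) = sup_{l ∈ L} (l x - f*(l))`. -/
noncomputable def biconj (L : Set (X → ℝ)) (f : X → EReal) (x : X) : EReal :=
  ⨆ l ∈ L, ((l x : EReal) - fconj f l)

/-- ε-subdifferential of `f` at `x` (empty whenever `x ∉ dom f`, i.e. `f x = ⊤`):
`l ∈ ∂_ε f(x)` iff `l ∈ L`, `f x < ⊤` and `f y - f x - (l y - l x) + ε ≥ 0` for all `y`. -/
def subdiff (L : Set (X → ℝ)) (f : X → EReal) (ε : ℝ) (x : X) : Set (X → ℝ) :=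
  {l | l ∈ L ∧ f x < ⊤ ∧ ∀ y, f x + ((l y - l x : ℝ) : EReal) ≤ f y + (ε : EReal)}

/-- Minkowski sum of finitely many subsets of an additive commutative monoid. -/
def minkSum {α : Type*} [AddCommMonoid α] {m : ℕ} (S : Fin m → Set α) : Set α :=
  {a | ∃ g : Fin m → α, (∀ i, g i ∈ S i) ∧ a = ∑ i, g i}

/-- Infimal convolution (over `L`) of finitely many functions,
with the infimum over the empty set equal to `+∞`. -/
noncomputable def infConv (L : Set (X → ℝ)) {m : ℕ}
    (φ : Fin m → (X → ℝ) → EReal) (l : X → ℝ) : EReal :=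
  ⨅ (g : Fin m → (X → ℝ)) (_ : ∀ i, g i ∈ L) (_ : ∑ i, g i = l), ∑ i, φ i (g i)

/-- The space of abstract affine functions generated by `L`: vertical shifts of members of `L`. -/
def Hspace (L : Set (X → ℝ)) : Set (X → ℝ) :=
  {h | ∃ l ∈ L, ∃ c : ℝ, h = fun x => l x + c}

/-- Support set of `f` inside a family `H` of functions: all members of `H` minorizing `f`. -/
def suppIn (H : Set (X → ℝ)) (f : X → EReal) : Set (X → ℝ) :=
  {h | h ∈ H ∧ ∀ x, (h x : EReal) ≤ f x}

/-- `f` is abstract convex w.r.t. the family `H`: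
`f` is the upper envelope of a nonempty subfamily of `H`. -/
def ConvexIn (H : Set (X → ℝ)) (f : X → EReal) : Prop :=
  ∃ S : Set (X → ℝ), S.Nonempty ∧ S ⊆ H ∧ ∀ x, f x = ⨆ h ∈ S, (h x : EReal)

/-- Abstract convexity of a subset `C` of the family `L` (separation property):
every `l₀ ∈ L \ C` is strictly separated from `C` at some point of `X`. -/
def ConvexSetIn (L : Set (X → ℝ)) (C : Set (X → ℝ)) : Prop :=
  C ⊆ L ∧ ∀ l₀ ∈ L, l₀ ∉ C → ∃ x, (⨆ l ∈ C, (l x : EReal)) < (l₀ x : EReal)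

/-- Epigraph of the conjugate of `f`, as a subset of `𝓛 × ℝ`. -/
def epiConj (L : Set (X → ℝ)) (f : X → EReal) : Set ((X → ℝ) × ℝ) :=
  {p | p.1 ∈ L ∧ fconj f p.1 ≤ (p.2 : EReal)}

lemma subdiff_mono' (L : Set (X → ℝ)) (f : X → EReal) {ε ε' : ℝ} (h : ε ≤ ε') (x : X) :
    subdiff L f ε x ⊆ subdiff L f ε' x := by
  rintro l ⟨hl, hfx, hy⟩
  exact ⟨hl, hfx, fun y => (hy y).trans (add_le_add_right (EReal.coe_le_coe_iff.mpr h) _)⟩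

lemma minkSum_mono' {α : Type*} [AddCommMonoid α] {m : ℕ} {S T : Fin m → Set α}
    (h : ∀ i, S i ⊆ T i) : minkSum S ⊆ minkSum T := by
  rintro a ⟨g, hg, rfl⟩
  exact ⟨g, fun i => h i (hg i), rfl⟩

/-- assuming the sum rule (with closures in `𝓛` w.r.t. a given topology),
conditions (A) and (B) are equivalent; moreover (B) with constant `K` yields (A) with
any constant `K' > K`, and (A) with constant `K` yields (B) with constant `m * K`. -/
theorem stmt9 [Nonempty X] (L : Set (X → ℝ)) (hL : IsLinSpace L)
    (T : TopologicalSpace (X → ℝ))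
    (m : ℕ) (hm : 2 ≤ m) (f : Fin m → X → EReal) (hf : ∀ i y, f i y ≠ ⊥)
    (hsum : ∀ x : X, ∀ ε : ℝ, 0 ≤ ε →
      subdiff L (fun y => ∑ i, f i y) ε x =
        ⋂ (η : ℝ) (_ : 0 < η),
          (@closure _ T (⋃ (e : Fin m → ℝ) (_ : ∀ i, 0 ≤ e i) (_ : ∑ i, e i = ε + η),
            minkSum fun i => subdiff L (f i) (e i) x) ∩ L)) :
    ((∃ K : ℝ, 0 < K ∧ ∀ x : X, ∀ ε : ℝ, 0 < ε →
        subdiff L (fun y => ∑ i, f i y) ε x ⊆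
          minkSum fun i => subdiff L (f i) (K * ε) x) ↔
      (∃ K : ℝ, 0 < K ∧ ∀ x : X, ∀ ε : ℝ, 0 < ε →
        @closure _ T (minkSum fun i => subdiff L (f i) ε x) ∩ L ⊆
          minkSum fun i => subdiff L (f i) (K * ε) x)) ∧
    (∀ K : ℝ, 0 < K →
      (∀ x : X, ∀ ε : ℝ, 0 < ε →
        @closure _ T (minkSum fun i => subdiff L (f i) ε x) ∩ L ⊆
          minkSum fun i => subdiff L (f i) (K * ε) x) →
      ∀ K' : ℝ, K < K' → ∀ x : X, ∀ ε : ℝ, 0 < ε →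
        subdiff L (fun y => ∑ i, f i y) ε x ⊆
          minkSum fun i => subdiff L (f i) (K' * ε) x) ∧
    (∀ K : ℝ, 0 < K →
      (∀ x : X, ∀ ε : ℝ, 0 < ε →
        subdiff L (fun y => ∑ i, f i y) ε x ⊆
          minkSum fun i => subdiff L (f i) (K * ε) x) →
      ∀ x : X, ∀ ε : ℝ, 0 < ε →
        @closure _ T (minkSum fun i => subdiff L (f i) ε x) ∩ L ⊆
          minkSum fun i => subdiff L (f i) ((m : ℝ) * K * ε) x) := by
  have hm0 : (0 : ℝ) < (m : ℝ) := by exact_mod_cast (by omega : 0 < m)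
  -- (B) with constant K implies (A) with any constant K' > K
  have keyBA : ∀ K : ℝ, 0 < K →
      (∀ x : X, ∀ ε : ℝ, 0 < ε →
        @closure _ T (minkSum fun i => subdiff L (f i) ε x) ∩ L ⊆
          minkSum fun i => subdiff L (f i) (K * ε) x) →
      ∀ K' : ℝ, K < K' → ∀ x : X, ∀ ε : ℝ, 0 < ε →
        subdiff L (fun y => ∑ i, f i y) ε x ⊆
          minkSum fun i => subdiff L (f i) (K' * ε) x := by
    intro K hK hB K' hKK' x ε hε l hl
    set η : ℝ := (K' - K) * ε / K with hηdef
    have hη : 0 < η := div_pos (mul_pos (by linarith) hε) hK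
    rw [hsum x ε hε.le] at hl
    simp only [mem_iInter] at hl
    obtain ⟨hlc, hlL⟩ := hl η hη
    have hU : (⋃ (e : Fin m → ℝ) (_ : ∀ i, 0 ≤ e i) (_ : ∑ i, e i = ε + η),
        minkSum fun i => subdiff L (f i) (e i) x) ⊆
        minkSum fun i => subdiff L (f i) (ε + η) x := by
      simp only [iUnion_subset_iff]
      intro e he hse
      refine minkSum_mono' fun i => subdiff_mono' _ _ ?_ _
      calc e i ≤ ∑ j, e j := Finset.single_le_sum (fun j _ => he j) (Finset.mem_univ i)
        _ = ε + η := hse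
    have hres := hB x (ε + η) (by linarith) ⟨closure_mono hU hlc, hlL⟩
    have heq : K * (ε + η) = K' * ε := by
      rw [hηdef]; field_simp; ring
    rwa [heq] at hres
  -- (A) with constant K implies (B) with constant m*K
  have keyAB : ∀ K : ℝ, 0 < K →
      (∀ x : X, ∀ ε : ℝ, 0 < ε →
        subdiff L (fun y => ∑ i, f i y) ε x ⊆
          minkSum fun i => subdiff L (f i) (K * ε) x) →
      ∀ x : X, ∀ ε : ℝ, 0 < ε →
        @closure _ T (minkSum fun i => subdiff L (f i) ε x) ∩ L ⊆
          minkSum fun i => subdiff L (f i) ((m : ℝ) * K * ε) x := by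
    intro K hK hA x ε hε l hl
    obtain ⟨hlc, hlL⟩ := hl
    have hmem : l ∈ subdiff L (fun y => ∑ i, f i y) ((m : ℝ) * ε) x := by
      rw [hsum x _ (by positivity)]
      simp only [mem_iInter, mem_inter_iff]
      intro η hη
      refine ⟨closure_mono ?_ hlc, hlL⟩
      intro a ha
      simp only [mem_iUnion]
      refine ⟨fun _ => ε + η / m, fun i => by positivity, ?_, ?_⟩
      · rw [Finset.sum_const, Finset.card_univ, Fintype.card_fin, nsmul_eq_mul]
        field_simp
      · have hdiv : 0 ≤ η / m := by positivity
        exact minkSum_mono' (fun i => subdiff_mono' _ _ (by linarith) _) ha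
    have hres := hA x ((m : ℝ) * ε) (by positivity) hmem
    have heq : K * ((m : ℝ) * ε) = (m : ℝ) * K * ε := by ring
    rwa [heq] at hres
  refine ⟨⟨?_, ?_⟩, keyBA, keyAB⟩
  · rintro ⟨K, hK, hA⟩
    exact ⟨(m : ℝ) * K, by positivity, keyAB K hK hA⟩
  · rintro ⟨K, hK, hB⟩
    exact ⟨K + 1, by linarith, keyBA K hK hB (K + 1) (by linarith)⟩
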